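/- Let μ > 0, λ ≥ 0, let H : (Fin 3)⁶ → ℝ be a sixth-order tensor that is positive with constant α > 0 on symmetric triadics, and let R > 0. Then there exists a constant c > 0 (depending only on μ, α and R) such that for every smooth u : ℝ³ → ℝ³ and every smooth ν̃ : ℝ³ → (Fin 3)³ → ℝ, both supported in the closed ball of radius R centered at the origin, with ν̃(x) a symmetric triadic for every x: ∫_{ℝ³} [2μ Σ_{j,k} e_{jk}(u)² + λ (div u)²] dx + ∫_{ℝ³} Σ ν̃_{ijk} H_{ijklmn} ν̃_{lmn} dx ≥ c ( ∫_{ℝ³} Σ_k u_k² dx + ∫_{ℝ³} Σ_{i,k} (∂_i u_k)² dx + ∫_{ℝ³} Σ_{i,j,k} ν̃_{ijk}² dx ). -/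

import Mathlib

open MeasureTheory

noncomputable section

/-- Points of `ℝ³`. -/
abbrev V : Type := Fin 3 → ℝ

/-- `i`-th partial derivative of a scalar field on `ℝ³`. -/
noncomputable def pd (i : Fin 3) (f : V → ℝ) : V → ℝ :=
  fun x => fderiv ℝ f x (Pi.single i 1)

/-- Divergence of a vector field. -/
noncomputable def divg (u : V → V) : V → ℝ :=
  fun x => ∑ j : Fin 3, pd j (fun y => u y j) x

/-- Componentwise Laplacian of a vector field. -/
noncomputable def vlap (u : V → V) (k : Fin 3) : V → ℝ :=
  fun x => ∑ j : Fin 3, pd j (pd j (fun y => u y k)) x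

/-- The strain tensor `e_{jk}(u) = ½(∂_j u_k + ∂_k u_j)`. -/
noncomputable def strain (u : V → V) (j k : Fin 3) : V → ℝ :=
  fun x => (1/2) * (pd j (fun y => u y k) x + pd k (fun y => u y j) x)

/-- The Lamé (Navier) operator `(Δ*·u)_k = μ (Δu)_k + (λ+μ) ∂_k (div u)`. -/
noncomputable def navier (lam mu : ℝ) (u : V → V) (k : Fin 3) : V → ℝ :=
  fun x => mu * vlap u k x + (lam + mu) * pd k (divg u) x

/-- The gradient of the strain, `(∇e(u))_{ijk} = ∂_i e_{jk}(u)`. -/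
noncomputable def gradStrain (u : V → V) (i j k : Fin 3) : V → ℝ :=
  pd i (strain u j k)

/-- Contraction of a sixth order tensor with a triadic:
`(H⫶κ)_{ijk} = Σ_{l,m,n} H_{ijklmn} κ_{lmn}`. -/
def Hcontr (H : Fin 3 → Fin 3 → Fin 3 → Fin 3 → Fin 3 → Fin 3 → ℝ)
    (κ : Fin 3 → Fin 3 → Fin 3 → ℝ) (i j k : Fin 3) : ℝ :=
  ∑ l : Fin 3, ∑ m : Fin 3, ∑ n : Fin 3, H i j k l m n * κ l m n

/-- A triadic is symmetric if it is symmetric in its last two indices. -/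
def SymTriadic (κ : Fin 3 → Fin 3 → Fin 3 → ℝ) : Prop :=
  ∀ i j k, κ i j k = κ i k j

/-- The symmetries `H_{ijklmn} = H_{ikjlmn} = H_{ijklnm} = H_{lmnijk}`. -/
def Hsym (H : Fin 3 → Fin 3 → Fin 3 → Fin 3 → Fin 3 → Fin 3 → ℝ) : Prop :=
  ∀ i j k l m n, H i j k l m n = H i k j l m n ∧
    H i j k l m n = H i j k l n m ∧ H i j k l m n = H l m n i j k

/-- Positivity of `H` with constant `α` on symmetric triadics. -/
def Hpos (H : Fin 3 → Fin 3 → Fin 3 → Fin 3 → Fin 3 → Fin 3 → ℝ) (α : ℝ) : Prop :=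
  ∀ κ : Fin 3 → Fin 3 → Fin 3 → ℝ, SymTriadic κ →
    α * (∑ i : Fin 3, ∑ j : Fin 3, ∑ k : Fin 3, (κ i j k)^2) ≤
      ∑ i : Fin 3, ∑ j : Fin 3, ∑ k : Fin 3, ∑ l : Fin 3, ∑ m : Fin 3, ∑ n : Fin 3,
        κ i j k * H i j k l m n * κ l m n

/-- The double stress tensor of Mindlin Form II gradient elasticity with constitutive
parameters `a₁,…,a₅`. -/
noncomputable def dstress (a1 a2 a3 a4 a5 : ℝ) (u : V → V) (i j k : Fin 3) : V → ℝ :=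
  fun x =>
    (1/2) * a1 * ((if j = k then (1:ℝ) else 0) * vlap u i x
      + (if i = j then (1:ℝ) else 0) * pd k (divg u) x
      + (if j = k then (1:ℝ) else 0) * pd i (divg u) x
      + (if i = k then (1:ℝ) else 0) * pd j (divg u) x)
    + 2 * a2 * (if j = k then (1:ℝ) else 0) * pd i (divg u) x
    + (1/2) * a3 * ((if i = j then (1:ℝ) else 0) * vlap u k x
      + (if i = j then (1:ℝ) else 0) * pd k (divg u) x
      + (if i = k then (1:ℝ) else 0) * vlap u j x
      + (if i = k then (1:ℝ) else 0) * pd j (divg u) x)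
    + a4 * (pd i (pd j (fun y => u y k)) x + pd i (pd k (fun y => u y j)) x)
    + (1/2) * a5 * (2 * pd j (pd k (fun y => u y i)) x
      + pd i (pd j (fun y => u y k)) x + pd i (pd k (fun y => u y j)) x)

section AuxCoercivity

open Metric Set Function

lemma contDiff_pd' {f : V → ℝ} (hf : ContDiff ℝ (⊤ : ℕ∞) f) (j : Fin 3) :
    ContDiff ℝ (⊤ : ℕ∞) (pd j f) := by
  have h1 : ContDiff ℝ (⊤ : ℕ∞) (fderiv ℝ f) := hf.fderiv_right (by norm_num)
  exact h1.clm_apply contDiff_const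

lemma pd_eq_zero' {f : V → ℝ} {x : V} (hx : x ∉ tsupport f) (j : Fin 3) : pd j f x = 0 := by
  have : fderiv ℝ f x = 0 := by
    by_contra h
    exact hx (support_fderiv_subset ℝ (f := f) h)
  simp [pd, this]

lemma tsupport_pd_subset' {f : V → ℝ} (j : Fin 3) : tsupport (pd j f) ⊆ tsupport f := by
  apply closure_minimal _ (isClosed_tsupport f)
  intro x hx
  by_contra h
  exact hx (pd_eq_zero' h j)

lemma hcs_of_subset' {f : V → ℝ} {R : ℝ} (h : tsupport f ⊆ closedBall (0:V) R) :
    HasCompactSupport f :=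
  HasCompactSupport.intro (isCompact_closedBall (0:V) R)
    (fun x hx => image_eq_zero_of_notMem_tsupport (fun hm => hx (h hm)))

lemma integ_of_zero {f : V → ℝ} {R : ℝ} (hc : Continuous f)
    (h : ∀ x ∉ closedBall (0:V) R, f x = 0) : Integrable f :=
  hc.integrable_of_hasCompactSupport
    (HasCompactSupport.intro (isCompact_closedBall (0:V) R) h)

lemma integ_of_subset' {f : V → ℝ} {R : ℝ} (hc : Continuous f)
    (h : tsupport f ⊆ closedBall (0:V) R) : Integrable f :=
  hc.integrable_of_hasCompactSupport (hcs_of_subset' h)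

lemma ibp' {f g : V → ℝ} (hf : ContDiff ℝ (⊤ : ℕ∞) f) (hg : ContDiff ℝ (⊤ : ℕ∞) g)
    (hfc : HasCompactSupport f) (hgc : HasCompactSupport g) (j : Fin 3) :
    ∫ x : V, pd j f x * g x = - ∫ x : V, f x * pd j g x := by
  obtain ⟨C, hC⟩ := hf.lipschitzWith_of_hasCompactSupport hfc (by norm_num)
  obtain ⟨D, hD⟩ := hg.lipschitzWith_of_hasCompactSupport hgc (by norm_num)
  have key := LipschitzWith.integral_lineDeriv_mul_eq (μ := volume) hC hD hgc (Pi.single j 1)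
  have hdf : Differentiable ℝ f := hf.differentiable (by norm_num)
  have hdg : Differentiable ℝ g := hg.differentiable (by norm_num)
  have h1 : ∀ x : V, lineDeriv ℝ f x (Pi.single j 1) = pd j f x := fun x =>
    (hdf x).lineDeriv_eq_fderiv
  have h2 : ∀ x : V, lineDeriv ℝ g x (-(Pi.single j 1)) = - pd j g x := fun x => by
    rw [(hdg x).lineDeriv_eq_fderiv, map_neg]; rfl
  simp only [h1, h2] at key
  rw [key, ← integral_neg]
  congr 1; ext x; ring

lemma pd_comm' {f : V → ℝ} (hf : ContDiff ℝ (⊤ : ℕ∞) f) (j k : Fin 3) (x : V) :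
    pd j (pd k f) x = pd k (pd j f) x := by
  have hsym : IsSymmSndFDerivAt ℝ f x :=
    (hf.contDiffAt (x := x)).isSymmSndFDerivAt (by simp [minSmoothness_of_isRCLikeNormedField]; exact WithTop.coe_le_coe.mpr le_top)
  have hd : ContDiff ℝ (⊤ : ℕ∞) (fderiv ℝ f) := hf.fderiv_right (by norm_num)
  have key : ∀ (v w : V), fderiv ℝ (fun y => fderiv ℝ f y w) x v
      = fderiv ℝ (fderiv ℝ f) x v w := by
    intro v w
    have : fderiv ℝ (fun y => (fderiv ℝ f y) w) x
        = (fderiv ℝ (fderiv ℝ f) x).flip w := by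
      have h := fderiv_clm_apply (c := fderiv ℝ f) (u := fun _ => w) (x := x)
        ((hd.differentiable (by norm_num)) x) (differentiableAt_const w)
      rw [h]; ext z; simp
    rw [this]; rfl
  show fderiv ℝ (fun y => fderiv ℝ f y (Pi.single k 1)) x (Pi.single j 1)
      = fderiv ℝ (fun y => fderiv ℝ f y (Pi.single j 1)) x (Pi.single k 1)
  rw [key, key]
  exact hsym _ _

lemma cross' {f g : V → ℝ} {R : ℝ} (hf : ContDiff ℝ (⊤ : ℕ∞) f) (hg : ContDiff ℝ (⊤ : ℕ∞) g)
    (hfs : tsupport f ⊆ closedBall (0:V) R) (hgs : tsupport g ⊆ closedBall (0:V) R)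
    (j k : Fin 3) :
    ∫ x : V, pd j f x * pd k g x = ∫ x : V, pd k f x * pd j g x := by
  have hfc := hcs_of_subset' hfs
  have h1 := ibp' hf (contDiff_pd' hg k) hfc
    (hcs_of_subset' ((tsupport_pd_subset' k).trans hgs)) j
  have h2 := ibp' hf (contDiff_pd' hg j) hfc
    (hcs_of_subset' ((tsupport_pd_subset' j).trans hgs)) k
  rw [h1, h2]
  congr 1
  apply integral_congr_ae
  filter_upwards with x
  rw [pd_comm' hg j k x]

lemma poincare' {f : V → ℝ} {R : ℝ} (hf : ContDiff ℝ (⊤ : ℕ∞) f)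
    (hs : tsupport f ⊆ closedBall (0:V) R) :
    ∫ x : V, (f x)^2 ≤ 4 * R^2 * ∫ x : V, (pd 0 f x)^2 := by
  set g : V → ℝ := fun x => (f x)^2 with hg
  have hgc : ContDiff ℝ (⊤ : ℕ∞) g := hf.pow 2
  have hgsupp : tsupport g ⊆ tsupport f := by
    apply closure_minimal _ (isClosed_tsupport f)
    intro x hx
    simp only [hg, mem_support, ne_eq, pow_eq_zero_iff] at hx
    exact subset_tsupport f (by simpa using hx)
  have hgcs : HasCompactSupport g := hcs_of_subset' (hgsupp.trans hs)
  have hdf : Differentiable ℝ f := hf.differentiable (by norm_num)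
  have hdg : Differentiable ℝ g := hgc.differentiable (by norm_num)
  have hφ : LipschitzWith 1 (fun x : V => x 0) := by
    apply LipschitzWith.of_dist_le_mul
    intro x y
    simpa using dist_le_pi_dist x y 0
  obtain ⟨D, hD⟩ := hgc.lipschitzWith_of_hasCompactSupport hgcs (by norm_num)
  have key := LipschitzWith.integral_lineDeriv_mul_eq (μ := volume) hφ hD hgcs (Pi.single 0 1)
  have h1 : ∀ x : V, lineDeriv ℝ (fun x : V => x 0) x (Pi.single 0 1) = 1 := by
    intro x
    have hφd : DifferentiableAt ℝ (fun x : V => x 0) x :=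
      (ContinuousLinearMap.proj (R := ℝ) (φ := fun _ : Fin 3 => ℝ) 0).differentiableAt
    rw [hφd.lineDeriv_eq_fderiv]
    rw [show (fun x : V => x 0)
        = ⇑(ContinuousLinearMap.proj (R := ℝ) (φ := fun _ : Fin 3 => ℝ) 0) from rfl,
      ContinuousLinearMap.fderiv]
    simp
  have h2 : ∀ x : V, lineDeriv ℝ g x (-(Pi.single 0 1)) = - pd 0 g x := fun x => by
    rw [(hdg x).lineDeriv_eq_fderiv, map_neg]; rfl
  simp only [h1, h2, one_mul] at key
  have hpdg : ∀ x : V, pd 0 g x = 2 * f x * pd 0 f x := by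
    intro x
    have h3 : fderiv ℝ g x = f x • fderiv ℝ f x + f x • fderiv ℝ f x := by
      have hmul := fderiv_fun_mul (𝕜 := ℝ) (hdf x) (hdf x)
      have h4 : g = fun y => f y * f y := by ext y; simp [hg, sq]
      rw [h4, hmul]
    simp only [pd, h3]
    simp; ring
  have hbound : ∀ x : V, (- pd 0 g x) * x 0 ≤ (1/2) * g x + 2 * R^2 * (pd 0 f x)^2 := by
    intro x
    by_cases hx : x ∈ tsupport f
    · have hxR : |x 0| ≤ R := by
        have hb := hs hx
        rw [mem_closedBall, dist_zero_right] at hb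
        exact le_trans (by simpa using norm_le_pi_norm x 0) hb
      have hx2 : (x 0)^2 ≤ R^2 := by
        rw [← sq_abs]; exact pow_le_pow_left₀ (abs_nonneg _) hxR 2
      rw [hpdg]
      simp only [hg]
      nlinarith [sq_nonneg (f x + 2 * (x 0) * pd 0 f x), sq_nonneg (pd 0 f x)]
    · have h1' : f x = 0 := image_eq_zero_of_notMem_tsupport hx
      have h2' : pd 0 f x = 0 := pd_eq_zero' hx 0
      have h3' : pd 0 g x = 0 := by rw [hpdg, h1']; ring
      rw [h3', h2']; simp [hg, h1']
  have hig : Integrable g := integ_of_subset' hgc.continuous (hgsupp.trans hs)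
  have hipd : Integrable (fun x : V => (pd 0 f x)^2) := by
    apply integ_of_zero (R := R) ((contDiff_pd' hf 0).pow 2).continuous
    intro x hx
    have : pd 0 f x = 0 := pd_eq_zero' (fun hm => hx (hs hm)) 0
    simp [this]
  have hilhs : Integrable (fun x : V => (- pd 0 g x) * x 0) := by
    apply integ_of_zero (R := R)
      ((contDiff_pd' hgc 0).continuous.neg.mul (continuous_apply 0))
    intro x hx
    have : pd 0 g x = 0 := pd_eq_zero' (fun hm => hx (hs (hgsupp hm))) 0
    simp [this]
  have hirhs : Integrable (fun x : V => (1/2) * g x + 2 * R^2 * (pd 0 f x)^2) :=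
    (hig.const_mul _).add (hipd.const_mul _)
  have hle : ∫ x : V, g x ≤ ∫ x : V, ((1/2) * g x + 2 * R^2 * (pd 0 f x)^2) := by
    rw [key]
    exact integral_mono hilhs hirhs hbound
  rw [integral_add (hig.const_mul _) (hipd.const_mul _), integral_const_mul,
    integral_const_mul] at hle
  linarith

end AuxCoercivity

/-- coercivity of the sesquilinear form `Φ` for fields supported in a fixed
ball: the elastic energy plus the `H`-energy dominates the full `H¹ × L²` norm, with a
constant depending only on `μ`, `α` and `R`. -/
theorem coercivity_of_energy_form
    (mu α R : ℝ) (hmu : 0 < mu) (hα : 0 < α) (hR : 0 < R) :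
    ∃ c : ℝ, 0 < c ∧
      ∀ lam : ℝ, 0 ≤ lam →
      ∀ H : Fin 3 → Fin 3 → Fin 3 → Fin 3 → Fin 3 → Fin 3 → ℝ, Hpos H α →
      ∀ (u : V → V) (ν : V → Fin 3 → Fin 3 → Fin 3 → ℝ),
        ContDiff ℝ (⊤ : ℕ∞) u → ContDiff ℝ (⊤ : ℕ∞) ν →
        tsupport u ⊆ Metric.closedBall (0 : V) R →
        tsupport ν ⊆ Metric.closedBall (0 : V) R →
        (∀ x, SymTriadic (ν x)) →
        c * ((∫ x : V, ∑ k : Fin 3, (u x k)^2)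
            + (∫ x : V, ∑ i : Fin 3, ∑ k : Fin 3, (pd i (fun y => u y k) x)^2)
            + (∫ x : V, ∑ i : Fin 3, ∑ j : Fin 3, ∑ k : Fin 3, (ν x i j k)^2))
          ≤ (∫ x : V, (2 * mu * ∑ j : Fin 3, ∑ k : Fin 3, (strain u j k x)^2
                + lam * (divg u x)^2))
            + (∫ x : V, ∑ i : Fin 3, ∑ j : Fin 3, ∑ k : Fin 3,
                ∑ l : Fin 3, ∑ m : Fin 3, ∑ n : Fin 3,
                  ν x i j k * H i j k l m n * ν x l m n) := by
  classical
  have hc1pos : 0 < mu / (4*R^2+1) := div_pos hmu (by positivity)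
  refine ⟨min (mu / (4*R^2+1)) α, lt_min hc1pos hα, ?_⟩
  intro lam hlam H hH u ν hu hν hsu hsν hsymν
  -- component regularity and support
  have hfk : ∀ k : Fin 3, ContDiff ℝ (⊤ : ℕ∞) (fun y => u y k) := fun k =>
    (contDiff_pi.mp hu) k
  have hfk_supp : ∀ k : Fin 3, tsupport (fun y => u y k) ⊆ Metric.closedBall (0:V) R := by
    intro k
    refine (closure_minimal ?_ (isClosed_tsupport u)).trans hsu
    intro x hx
    simp only [Function.mem_support, ne_eq] at hx
    apply subset_tsupport u
    simp only [Function.mem_support, ne_eq]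
    intro h0
    exact hx (by simpa using congrFun h0 k)
  have hpz : ∀ (i k : Fin 3), ∀ x ∉ Metric.closedBall (0:V) R,
      pd i (fun y => u y k) x = 0 := fun i k x hx =>
    pd_eq_zero' (fun hm => hx (hfk_supp k hm)) i
  have huz : ∀ x ∉ Metric.closedBall (0:V) R, ∀ k, u x k = 0 := by
    intro x hx k
    have h0 : u x = 0 := image_eq_zero_of_notMem_tsupport (fun hm => hx (hsu hm))
    simpa using congrFun h0 k
  have hνz : ∀ x ∉ Metric.closedBall (0:V) R, ν x = 0 := fun x hx =>
    image_eq_zero_of_notMem_tsupport (fun hm => hx (hsν hm))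
  have hνc : ∀ i j k : Fin 3, Continuous fun x => ν x i j k := by
    intro i j k
    exact (continuous_apply k).comp
      ((continuous_apply j).comp ((continuous_apply i).comp hν.continuous))
  have hpc : ∀ i k : Fin 3, Continuous (pd i (fun y => u y k)) := fun i k =>
    (contDiff_pd' (hfk k) i).continuous
  have hdivz : ∀ x ∉ Metric.closedBall (0:V) R, divg u x = 0 := by
    intro x hx
    exact Finset.sum_eq_zero fun j _ => hpz j j x hx
  have hdivc : Continuous (divg u) :=
    continuous_finset_sum _ (fun j _ => hpc j j)
  -- integrability facts
  have iuk2 : ∀ k : Fin 3, Integrable (fun x : V => (u x k)^2) := fun k =>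
    integ_of_zero (((hfk k).continuous).pow 2) (fun x hx => by rw [huz x hx k]; ring)
  have ipik2 : ∀ i k : Fin 3, Integrable (fun x : V => (pd i (fun y => u y k) x)^2) :=
    fun i k => integ_of_zero ((hpc i k).pow 2) (fun x hx => by rw [hpz i k x hx]; ring)
  have iA : Integrable (fun x : V => ∑ k : Fin 3, (u x k)^2) :=
    integrable_finset_sum _ (fun k _ => iuk2 k)
  have iB : Integrable (fun x : V => ∑ i : Fin 3, ∑ k : Fin 3,
      (pd i (fun y => u y k) x)^2) :=
    integrable_finset_sum _ (fun i _ => integrable_finset_sum _ (fun k _ => ipik2 i k))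
  have iνk2 : Integrable (fun x : V => ∑ i : Fin 3, ∑ j : Fin 3, ∑ k : Fin 3,
      (ν x i j k)^2) := by
    apply integ_of_zero
    · exact continuous_finset_sum _ fun i _ => continuous_finset_sum _ fun j _ =>
        continuous_finset_sum _ fun k _ => (hνc i j k).pow 2
    · intro x hx
      refine Finset.sum_eq_zero fun i _ => Finset.sum_eq_zero fun j _ =>
        Finset.sum_eq_zero fun k _ => ?_
      rw [hνz x hx]; simp
  have iCrjk : ∀ j k : Fin 3, Integrable (fun x : V =>
      pd j (fun y => u y k) x * pd k (fun y => u y j) x) := fun j k =>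
    integ_of_zero ((hpc j k).mul (hpc k j)) (fun x hx => by rw [hpz j k x hx]; ring)
  have iCr : Integrable (fun x : V => ∑ j : Fin 3, ∑ k : Fin 3,
      pd j (fun y => u y k) x * pd k (fun y => u y j) x) :=
    integrable_finset_sum _ (fun j _ => integrable_finset_sum _ (fun k _ => iCrjk j k))
  have iDv2 : Integrable (fun x : V => (divg u x)^2) :=
    integ_of_zero (hdivc.pow 2) (fun x hx => by rw [hdivz x hx]; ring)
  have iHν : Integrable (fun x : V => ∑ i : Fin 3, ∑ j : Fin 3, ∑ k : Fin 3,
      ∑ l : Fin 3, ∑ m : Fin 3, ∑ n : Fin 3, ν x i j k * H i j k l m n * ν x l m n) := by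
    apply integ_of_zero
    · refine continuous_finset_sum _ fun i _ => continuous_finset_sum _ fun j _ =>
        continuous_finset_sum _ fun k _ => continuous_finset_sum _ fun l _ =>
        continuous_finset_sum _ fun m _ => continuous_finset_sum _ fun n _ => ?_
      exact ((hνc i j k).mul continuous_const).mul (hνc l m n)
    · intro x hx
      refine Finset.sum_eq_zero fun i _ => Finset.sum_eq_zero fun j _ =>
        Finset.sum_eq_zero fun k _ => Finset.sum_eq_zero fun l _ =>
        Finset.sum_eq_zero fun m _ => Finset.sum_eq_zero fun n _ => ?_
      rw [hνz x hx]; simp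
  -- nonnegativity of the three L² quantities
  have hIAnn : 0 ≤ ∫ x : V, ∑ k : Fin 3, (u x k)^2 :=
    integral_nonneg fun x => Finset.sum_nonneg fun k _ => sq_nonneg _
  have hIBnn : 0 ≤ ∫ x : V, ∑ i : Fin 3, ∑ k : Fin 3, (pd i (fun y => u y k) x)^2 :=
    integral_nonneg fun x => Finset.sum_nonneg fun i _ =>
      Finset.sum_nonneg fun k _ => sq_nonneg _
  have hICnn : 0 ≤ ∫ x : V, ∑ i : Fin 3, ∑ j : Fin 3, ∑ k : Fin 3, (ν x i j k)^2 :=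
    integral_nonneg fun x => Finset.sum_nonneg fun i _ => Finset.sum_nonneg fun j _ =>
      Finset.sum_nonneg fun k _ => sq_nonneg _
  -- H-term dominates α ∫ Σ ν²
  have hIH : α * (∫ x : V, ∑ i : Fin 3, ∑ j : Fin 3, ∑ k : Fin 3, (ν x i j k)^2)
      ≤ ∫ x : V, ∑ i : Fin 3, ∑ j : Fin 3, ∑ k : Fin 3,
          ∑ l : Fin 3, ∑ m : Fin 3, ∑ n : Fin 3, ν x i j k * H i j k l m n * ν x l m n := by
    rw [← integral_const_mul]
    exact integral_mono (iνk2.const_mul α) iHν (fun x => hH (ν x) (hsymν x))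
  -- the cross term equals ∫ (div u)²
  have hCr : (∫ x : V, ∑ j : Fin 3, ∑ k : Fin 3,
        pd j (fun y => u y k) x * pd k (fun y => u y j) x)
      = ∫ x : V, (divg u x)^2 := by
    rw [integral_finset_sum _ (fun j _ => integrable_finset_sum _ (fun k _ => iCrjk j k))]
    have step1 : ∀ j : Fin 3, (∫ x : V, ∑ k : Fin 3,
          pd j (fun y => u y k) x * pd k (fun y => u y j) x)
        = ∑ k : Fin 3, ∫ x : V, pd k (fun y => u y k) x * pd j (fun y => u y j) x := by
      intro j
      rw [integral_finset_sum _ (fun k _ => iCrjk j k)]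
      exact Finset.sum_congr rfl fun k _ =>
        cross' (hfk k) (hfk j) (hfk_supp k) (hfk_supp j) j k
    rw [Finset.sum_congr rfl (fun j _ => step1 j)]
    have iKK : ∀ j k : Fin 3, Integrable (fun x : V =>
        pd k (fun y => u y k) x * pd j (fun y => u y j) x) := fun j k =>
      integ_of_zero ((hpc k k).mul (hpc j j)) (fun x hx => by rw [hpz k k x hx]; ring)
    rw [show (∑ j : Fin 3, ∑ k : Fin 3, ∫ x : V,
          pd k (fun y => u y k) x * pd j (fun y => u y j) x)
        = ∫ x : V, ∑ j : Fin 3, ∑ k : Fin 3,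
          pd k (fun y => u y k) x * pd j (fun y => u y j) x by
      rw [integral_finset_sum _ (fun j _ => integrable_finset_sum _ (fun k _ => iKK j k))]
      exact Finset.sum_congr rfl fun j _ => (integral_finset_sum _ (fun k _ => iKK j k)).symm]
    apply integral_congr_ae
    filter_upwards with x
    simp only [divg, Fin.sum_univ_three]
    ring
  -- expand the elastic energy
  have ptid : ∀ x : V, 2 * mu * ∑ j : Fin 3, ∑ k : Fin 3, (strain u j k x)^2
        + lam * (divg u x)^2
      = mu * (∑ i : Fin 3, ∑ k : Fin 3, (pd i (fun y => u y k) x)^2)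
        + (mu * (∑ j : Fin 3, ∑ k : Fin 3,
            pd j (fun y => u y k) x * pd k (fun y => u y j) x)
          + lam * (divg u x)^2) := by
    intro x
    simp only [strain, Fin.sum_univ_three]
    ring
  have hIE : (∫ x : V, (2 * mu * ∑ j : Fin 3, ∑ k : Fin 3, (strain u j k x)^2
        + lam * (divg u x)^2))
      = mu * (∫ x : V, ∑ i : Fin 3, ∑ k : Fin 3, (pd i (fun y => u y k) x)^2)
        + ((mu + lam) * ∫ x : V, (divg u x)^2) := by
    have i2 : Integrable (fun x : V => mu * (∑ j : Fin 3, ∑ k : Fin 3,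
        pd j (fun y => u y k) x * pd k (fun y => u y j) x) + lam * (divg u x)^2) :=
      (iCr.const_mul mu).add (iDv2.const_mul lam)
    rw [integral_congr_ae (Filter.Eventually.of_forall ptid)]
    rw [integral_add (iB.const_mul mu) i2]
    rw [integral_add (iCr.const_mul mu) (iDv2.const_mul lam),
      integral_const_mul, integral_const_mul, integral_const_mul, hCr]
    ring
  have hDnn : 0 ≤ ∫ x : V, (divg u x)^2 := integral_nonneg fun x => sq_nonneg _
  -- Poincaré
  have hA4 : (∫ x : V, ∑ k : Fin 3, (u x k)^2)
      ≤ 4 * R^2 * ∫ x : V, ∑ i : Fin 3, ∑ k : Fin 3, (pd i (fun y => u y k) x)^2 := by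
    have h1 : (∫ x : V, ∑ k : Fin 3, (u x k)^2)
        = ∑ k : Fin 3, ∫ x : V, (u x k)^2 :=
      integral_finset_sum _ (fun k _ => iuk2 k)
    have h2 : ∀ k : Fin 3, (∫ x : V, (u x k)^2)
        ≤ 4 * R^2 * ∫ x : V, (pd 0 (fun y => u y k) x)^2 := fun k =>
      poincare' (hfk k) (hfk_supp k)
    have h3 : (∫ x : V, ∑ i : Fin 3, ∑ k : Fin 3, (pd i (fun y => u y k) x)^2)
        = ∑ i : Fin 3, ∑ k : Fin 3, ∫ x : V, (pd i (fun y => u y k) x)^2 := by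
      rw [integral_finset_sum _ (fun i _ => integrable_finset_sum _ (fun k _ => ipik2 i k))]
      exact Finset.sum_congr rfl fun i _ => integral_finset_sum _ (fun k _ => ipik2 i k)
    have h4 : (∑ k : Fin 3, ∫ x : V, (pd 0 (fun y => u y k) x)^2)
        ≤ ∑ i : Fin 3, ∑ k : Fin 3, ∫ x : V, (pd i (fun y => u y k) x)^2 := by
      refine Finset.single_le_sum
        (f := fun i => ∑ k : Fin 3, ∫ x : V, (pd i (fun y => u y k) x)^2) ?_
        (Finset.mem_univ 0)
      intro i _
      exact Finset.sum_nonneg fun k _ => integral_nonneg fun x => sq_nonneg _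
    calc (∫ x : V, ∑ k : Fin 3, (u x k)^2)
        = ∑ k : Fin 3, ∫ x : V, (u x k)^2 := h1
      _ ≤ ∑ k : Fin 3, 4 * R^2 * ∫ x : V, (pd 0 (fun y => u y k) x)^2 :=
          Finset.sum_le_sum fun k _ => h2 k
      _ = 4 * R^2 * ∑ k : Fin 3, ∫ x : V, (pd 0 (fun y => u y k) x)^2 := by
          rw [Finset.mul_sum]
      _ ≤ 4 * R^2 * ∑ i : Fin 3, ∑ k : Fin 3, ∫ x : V, (pd i (fun y => u y k) x)^2 := by
          apply mul_le_mul_of_nonneg_left h4 (by positivity)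
      _ = 4 * R^2 * ∫ x : V, ∑ i : Fin 3, ∑ k : Fin 3, (pd i (fun y => u y k) x)^2 := by
          rw [h3]
  -- final assembly
  set IA := ∫ x : V, ∑ k : Fin 3, (u x k)^2 with hIAdef
  set IB := ∫ x : V, ∑ i : Fin 3, ∑ k : Fin 3, (pd i (fun y => u y k) x)^2 with hIBdef
  set IC := ∫ x : V, ∑ i : Fin 3, ∑ j : Fin 3, ∑ k : Fin 3, (ν x i j k)^2 with hICdef
  set D := ∫ x : V, (divg u x)^2 with hDdef
  rw [hIE]
  have h5 : (mu / (4*R^2+1)) * (IA + IB) ≤ mu * IB := by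
    have h6 : IA + IB ≤ (4*R^2+1) * IB := by linarith
    calc (mu / (4*R^2+1)) * (IA + IB) ≤ (mu / (4*R^2+1)) * ((4*R^2+1) * IB) :=
          mul_le_mul_of_nonneg_left h6 hc1pos.le
      _ = mu * IB := by field_simp
  have h7 : min (mu / (4*R^2+1)) α * (IA + IB + IC)
      ≤ (mu / (4*R^2+1)) * (IA + IB) + α * IC := by
    have m1 := min_le_left (mu / (4*R^2+1)) α
    have m2 := min_le_right (mu / (4*R^2+1)) α
    have m3 : (0:ℝ) ≤ min (mu / (4*R^2+1)) α := le_min hc1pos.le hα.le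
    nlinarith [hIAnn, hIBnn, hICnn]
  have h8 : 0 ≤ (mu + lam) * D := mul_nonneg (by linarith) hDnn
  linarith
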